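/- Let h ∈ ℂ[X,Y] be non-zero and let S be a segment of the right Newton polygon of h. If θ is a rational number and c a non-zero complex number with in(h,S)(X, cX^θ) = 0 (as an identity of Puiseux/Laurent expressions), then θ = (|S₁|/|S₂|)·σ(S), i.e. θ equals the declivity of S. -/

import Mathlib

open scoped Classical

noncomputable section

/-- A (candidate) segment in the plane, given by its two lattice endpoints. -/
structure Seg where
  P : ℕ × ℕ
  Q : ℕ × ℕ

/-- the support of a polynomial in two variables, as a finite set of pairs `(α,β)`. -/
def supp (h : MvPolynomial (Fin 2) ℂ) : Finset (ℕ × ℕ) :=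
  h.support.image fun d => (d 0, d 1)

/-- the coefficient `h_{αβ}` of `X^α Y^β` in `h`. -/
def coeff2 (h : MvPolynomial (Fin 2) ℂ) (p : ℕ × ℕ) : ℂ :=
  MvPolynomial.coeff (Finsupp.single 0 p.1 + Finsupp.single 1 p.2) h

/-- the linear functional whose level lines are parallel to `S`, normalized so that
(for a right-polygon segment, `S.P.2 < S.Q.2`) its gradient points to the right. -/
def lfun (S : Seg) (v : ℕ × ℕ) : ℤ :=
  ((S.Q.2 : ℤ) - S.P.2) * v.1 - ((S.Q.1 : ℤ) - S.P.1) * v.2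

/-- the linear functional whose level lines are parallel to `S`, normalized so that
(for a top-polygon segment, `S.P.1 < S.Q.1`) its gradient points upwards. -/
def gfun (S : Seg) (v : ℕ × ℕ) : ℤ :=
  ((S.Q.1 : ℤ) - S.P.1) * v.2 - ((S.Q.2 : ℤ) - S.P.2) * v.1

/-- `v` lies on the segment with endpoints `S.P` and `S.Q`
(collinear and inside the bounding box). -/
def OnSeg (S : Seg) (v : ℕ × ℕ) : Prop :=
  lfun S v = lfun S S.P ∧
  min S.P.1 S.Q.1 ≤ v.1 ∧ v.1 ≤ max S.P.1 S.Q.1 ∧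
  min S.P.2 S.Q.2 ≤ v.2 ∧ v.2 ≤ max S.P.2 S.Q.2

/-- `S` is a segment (one-dimensional boundary face) of the right Newton polygon of `h`:
its endpoints (ordered by increasing ordinate) are in the support, the whole support lies
weakly to the left of the line through `S` (the supporting line has outward normal with
positive first coordinate), and `S` is a maximal face: every support point on this line has
ordinate between those of the endpoints. Such segments are exactly the boundary faces on
the right of the Newton diagram joining the lines `β = ord_Y h` and `β = deg_Y h`. -/
def RightSeg (h : MvPolynomial (Fin 2) ℂ) (S : Seg) : Prop :=
  S.P ∈ supp h ∧ S.Q ∈ supp h ∧ S.P.2 < S.Q.2 ∧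
  (∀ v ∈ supp h, lfun S v ≤ lfun S S.P) ∧
  (∀ v ∈ supp h, lfun S v = lfun S S.P → S.P.2 ≤ v.2 ∧ v.2 ≤ S.Q.2)

/-- `S` is a segment of the top Newton polygon of `h` (endpoints ordered by increasing
abscissa; the supporting line has outward normal with positive second coordinate). -/
def TopSeg (h : MvPolynomial (Fin 2) ℂ) (S : Seg) : Prop :=
  S.P ∈ supp h ∧ S.Q ∈ supp h ∧ S.P.1 < S.Q.1 ∧
  (∀ v ∈ supp h, gfun S v ≤ gfun S S.P) ∧
  (∀ v ∈ supp h, gfun S v = gfun S S.P → S.P.1 ≤ v.1 ∧ v.1 ≤ S.Q.1)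

/-- `σ(S)` for a right-polygon segment (endpoints ordered by increasing ordinate):
`0` if `S` is vertical, otherwise minus the sign of the slope of `S`. -/
def sigmaR (S : Seg) : ℤ :=
  if S.P.1 = S.Q.1 then 0 else if S.P.1 < S.Q.1 then -1 else 1

/-- `σ(S)` for a top-polygon segment (endpoints ordered by increasing abscissa). -/
def sigmaT (S : Seg) : ℤ :=
  if S.P.2 = S.Q.2 then 0 else if S.P.2 < S.Q.2 then -1 else 1

/-- `|S₁|`, the length of the projection of `S` on the horizontal axis. -/
def len1 (S : Seg) : ℚ := |(S.Q.1 : ℚ) - S.P.1|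

/-- `|S₂|`, the length of the projection of `S` on the vertical axis. -/
def len2 (S : Seg) : ℚ := |(S.Q.2 : ℚ) - S.P.2|

/-- the declivity `(|S₁|/|S₂|)·σ(S)` of a right-polygon segment. -/
def decl (S : Seg) : ℚ := len1 S / len2 S * (sigmaR S : ℚ)

/-- the declivity `(|S₂|/|S₁|)·σ(S)` of a top-polygon segment. -/
def tdecl (S : Seg) : ℚ := len2 S / len1 S * (sigmaT S : ℚ)

/-- `α(S)`: the abscissa of the intersection of the line through `S` with the
horizontal axis. -/
def alphaS (S : Seg) : ℚ := (S.P.1 : ℚ) + (S.P.2 : ℚ) * decl S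

/-- `β(S)`: the ordinate of the intersection of the line through `S` with the
vertical axis. -/
def betaS (S : Seg) : ℚ := (S.P.2 : ℚ) + (S.P.1 : ℚ) * tdecl S

/-- a right-polygon segment is exceptional if it joins the horizontal axis with a
point of the form `(p, 1)`. -/
def RExcep (S : Seg) : Prop := S.P.2 = 0 ∧ S.Q.2 = 1

/-- a top-polygon segment is exceptional if it joins the vertical axis with a
point of the form `(1, q)`. -/
def TExcep (S : Seg) : Prop := S.P.1 = 0 ∧ S.Q.1 = 1

/-- `in(h,S)`: the sum of the monomials of `h` supported on the segment `S`. -/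
def inPoly (h : MvPolynomial (Fin 2) ℂ) (S : Seg) : MvPolynomial (Fin 2) ℂ :=
  ∑ p ∈ (supp h).filter (OnSeg S),
    MvPolynomial.monomial (Finsupp.single 0 p.1 + Finsupp.single 1 p.2) (coeff2 h p)

/-- Proposition 6.1(b): if `S` is a segment of the right Newton polygon of `h ≠ 0`,
`θ ∈ ℚ`, `c ≠ 0`, and `in(h,S)(X, cX^θ) = 0` as an identity of Puiseux expressions
(i.e. for every exponent `m`, the coefficient `∑_{(α,β)∈S, α+θβ=m} h_{αβ} c^β` of `X^m`
vanishes), then `θ = (|S₁|/|S₂|)·σ(S)`, the declivity of `S`. -/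

lemma decl_eq_aux (S : Seg) (h2 : S.P.2 < S.Q.2) :
    decl S = ((S.P.1 : ℚ) - S.Q.1) / ((S.Q.2 : ℚ) - S.P.2) := by
  have hq : (S.P.2 : ℚ) < S.Q.2 := by exact_mod_cast h2
  unfold decl len1 len2 sigmaR
  rcases lt_trichotomy S.P.1 S.Q.1 with h1 | h1 | h1
  · have hq1 : (S.P.1 : ℚ) < S.Q.1 := by exact_mod_cast h1
    rw [if_neg (Nat.ne_of_lt h1), if_pos h1, abs_of_pos (by linarith), abs_of_pos (by linarith)]
    field_simp
    push_cast
    ring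
  · rw [if_pos h1]
    have : (S.P.1 : ℚ) = S.Q.1 := by exact_mod_cast h1
    simp [this]
  · have hq1 : (S.Q.1 : ℚ) < S.P.1 := by exact_mod_cast h1
    rw [if_neg (Nat.ne_of_gt h1), if_neg (by omega), abs_of_neg (by linarith),
      abs_of_pos (by linarith)]
    field_simp
    push_cast
    ring

lemma coeff2_ne_zero (h : MvPolynomial (Fin 2) ℂ) (p : ℕ × ℕ) (hp : p ∈ supp h) :
    coeff2 h p ≠ 0 := by
  obtain ⟨d, hd, hde⟩ := Finset.mem_image.mp hp
  have hde1 : d 0 = p.1 := by rw [← hde]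
  have hde2 : d 1 = p.2 := by rw [← hde]
  have hdd : Finsupp.single 0 p.1 + Finsupp.single 1 p.2 = d := by
    ext i
    fin_cases i
    · simp [Finsupp.single_apply, hde1]
    · simp [Finsupp.single_apply, hde2]
  unfold coeff2
  rw [hdd]
  exact MvPolynomial.mem_support_iff.mp hd

theorem stmt11 (h : MvPolynomial (Fin 2) ℂ) (h0 : h ≠ 0) (S : Seg) (hS : RightSeg h S)
    (θ : ℚ) (c : ℂ) (hc : c ≠ 0)
    (hzero : ∀ m : ℚ,
      ∑ p ∈ (supp h).filter (fun p => OnSeg S p ∧ (p.1 : ℚ) + θ * (p.2 : ℚ) = m),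
        coeff2 h p * c ^ p.2 = 0) :
    θ = decl S := by
  by_contra hne
  obtain ⟨hP, hQ, hPQ, hmax, hface⟩ := hS
  have hq2 : (S.P.2 : ℚ) < S.Q.2 := by exact_mod_cast hPQ
  have hdecl := decl_eq_aux S hPQ
  have hkey : ((S.Q.2 : ℚ) - S.P.2) * θ + ((S.Q.1 : ℚ) - S.P.1) ≠ 0 := by
    intro hk
    apply hne
    rw [hdecl, eq_div_iff (by linarith)]
    linear_combination hk
  have hfilter : (supp h).filter
      (fun p => OnSeg S p ∧ (p.1 : ℚ) + θ * (p.2 : ℚ) = (S.P.1 : ℚ) + θ * (S.P.2 : ℚ))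
      = {S.P} := by
    apply Finset.eq_singleton_iff_unique_mem.mpr
    constructor
    · refine Finset.mem_filter.mpr ⟨hP, ⟨rfl, ?_, ?_, ?_, ?_⟩, rfl⟩
      · exact min_le_left _ _
      · exact le_max_left _ _
      · exact min_le_left _ _
      · exact le_max_left _ _
    · rintro p hp
      obtain ⟨hpsupp, ⟨hlf, -⟩, harith⟩ := Finset.mem_filter.mp hp
      have h1 : ((S.Q.2 : ℚ) - S.P.2) * p.1 - ((S.Q.1 : ℚ) - S.P.1) * p.2
          = ((S.Q.2 : ℚ) - S.P.2) * S.P.1 - ((S.Q.1 : ℚ) - S.P.1) * S.P.2 := by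
        have := hlf
        unfold lfun at this
        exact_mod_cast congrArg (fun z : ℤ => (z : ℚ)) this
      have hz : ((p.2 : ℚ) - S.P.2) * (((S.Q.2 : ℚ) - S.P.2) * θ + ((S.Q.1 : ℚ) - S.P.1)) = 0 := by
        linear_combination ((S.Q.2 : ℚ) - S.P.2) * harith - h1
      have hp2 : (p.2 : ℚ) = S.P.2 := by
        rcases mul_eq_zero.mp hz with hz1 | hz1
        · linarith
        · exact absurd hz1 hkey
      have hp2' : p.2 = S.P.2 := by exact_mod_cast hp2
      have hp1 : (p.1 : ℚ) = S.P.1 := by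
        rw [hp2] at harith; linarith
      have hp1' : p.1 = S.P.1 := by exact_mod_cast hp1
      exact Prod.ext hp1' hp2'
  have := hzero ((S.P.1 : ℚ) + θ * (S.P.2 : ℚ))
  rw [hfilter, Finset.sum_singleton] at this
  exact (mul_ne_zero (coeff2_ne_zero h S.P hP) (pow_ne_zero _ hc)) this
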